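/- Let R be a principal ideal domain and R[x] a multivariate polynomial ring with a fixed monomial ordering. For any polynomial f in R[x] and any finite set B = {b_1,...,b_s} of nonzero polynomials in R[x] \ R, there exist a nonzero multiplier λ ∈ R, quotients q_1,...,q_s ∈ R[x], and a remainder r ∈ R[x] such that λ·f = q_1·b_1 + ... + q_s·b_s + r, where no monomial in the support of r lies in the monomial ideal generated by the leading monomials of b_1,...,b_s. -/

import Mathlib

open MvPolynomial

/-- The leading monomial (exponent) of `f` with respect to the monomial order `m`. -/
noncomputable def mdeg {σ : Type*} (m : MonomialOrder σ) {R : Type*} [CommSemiring R]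
    (f : MvPolynomial σ R) : σ →₀ ℕ :=
  m.toSyn.symm (f.support.sup fun d => m.toSyn d)

lemma toSyn_mdeg {σ : Type*} (m : MonomialOrder σ) {R : Type*} [CommSemiring R]
    (f : MvPolynomial σ R) : m.toSyn (mdeg m f) = f.support.sup fun d => m.toSyn d := by
  simp [mdeg]

lemma le_mdeg {σ : Type*} (m : MonomialOrder σ) {R : Type*} [CommSemiring R]
    {f : MvPolynomial σ R} {d : σ →₀ ℕ} (hd : d ∈ f.support) :
    m.toSyn d ≤ m.toSyn (mdeg m f) := by
  rw [toSyn_mdeg]; exact Finset.le_sup hd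

lemma mdeg_mem_support {σ : Type*} (m : MonomialOrder σ) {R : Type*} [CommSemiring R]
    {f : MvPolynomial σ R} (hf : f ≠ 0) : mdeg m f ∈ f.support := by
  obtain ⟨d, hd, hsup⟩ := Finset.exists_mem_eq_sup f.support
    (MvPolynomial.support_nonempty.mpr hf) (fun d => m.toSyn d)
  have : mdeg m f = d := by
    rw [mdeg, hsup]; exact m.toSyn.symm_apply_apply d
  rwa [this]

lemma mdeg_ne_zero {σ : Type*} (m : MonomialOrder σ) {R : Type*} [CommSemiring R]
    {f : MvPolynomial σ R} (hf : f ∉ Set.range (C : R → MvPolynomial σ R)) :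
    mdeg m f ≠ 0 := by
  classical
  intro h0
  apply hf
  refine ⟨f.coeff 0, ?_⟩
  ext d
  rw [coeff_C]
  by_cases hd : d = 0
  · simp [hd, eq_comm]
  · rw [if_neg (fun h => hd h.symm)]
    by_contra hc
    have hds : d ∈ f.support := MvPolynomial.mem_support_iff.mpr (fun h => hc h.symm)
    have := le_mdeg m hds
    rw [h0] at this
    have hd0 : m.toSyn d = 0 := le_antisymm (by simpa using this) bot_le
    exact hd (by simpa using m.toSyn.injective (by simpa using hd0))

/-- **Pseudo-division over a PID.**  For any `f` and any finite family `B = {b_1, …, b_s}` of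
nonzero polynomials not lying in `R`, there are a nonzero multiplier `λ ∈ R`, quotients `q_j`
and a remainder `r` with `λ·f = ∑ q_j·b_j + r`, where no monomial of the support of `r` lies in
the monomial ideal generated by the leading monomials of the `b_j`. -/
theorem pseudo_division_over_PID {σ R : Type*} [CommRing R] [IsDomain R]
    [IsPrincipalIdealRing R] (m : MonomialOrder σ) (s : ℕ)
    (b : Fin s → MvPolynomial σ R)
    (hb0 : ∀ j, b j ≠ 0)
    (hbR : ∀ j, b j ∉ Set.range (C : R → MvPolynomial σ R))
    (f : MvPolynomial σ R) :
    ∃ (lam : R) (q : Fin s → MvPolynomial σ R) (r : MvPolynomial σ R),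
      lam ≠ 0 ∧
      C lam * f = (∑ j, q j * b j) + r ∧
      ∀ d ∈ r.support, ∀ j, ¬ mdeg m (b j) ≤ d := by
  classical
  suffices H : ∀ N : m.syn, ∀ g : MvPolynomial σ R,
      (g.support.filter (fun d => ∃ j, mdeg m (b j) ≤ d)).sup m.toSyn = N →
      ∃ (lam : R) (q : Fin s → MvPolynomial σ R) (r : MvPolynomial σ R),
      lam ≠ 0 ∧
      C lam * g = (∑ j, q j * b j) + r ∧
      ∀ d ∈ r.support, ∀ j, ¬ mdeg m (b j) ≤ d by
    exact H _ f rfl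
  intro N
  induction N using WellFoundedLT.induction with
  | _ N ih =>
  intro g hgN
  by_cases hS : (g.support.filter (fun d => ∃ j, mdeg m (b j) ≤ d)) = ∅
  · refine ⟨1, 0, g, one_ne_zero, by simp, ?_⟩
    intro d hd j hj
    have : d ∈ (g.support.filter (fun d => ∃ j, mdeg m (b j) ≤ d)) :=
      Finset.mem_filter.mpr ⟨hd, ⟨j, hj⟩⟩
    simp [hS] at this
  · -- nonempty case
    have hSne : (g.support.filter (fun d => ∃ j, mdeg m (b j) ≤ d)).Nonempty :=
      Finset.nonempty_iff_ne_empty.mpr hS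
    obtain ⟨d, hdmem, hdsup⟩ := Finset.exists_mem_eq_sup _ hSne (⇑m.toSyn)
    obtain ⟨hdg, j, hj⟩ := Finset.mem_filter.mp hdmem
    set c : R := g.coeff d with hc
    have hcne : c ≠ 0 := MvPolynomial.mem_support_iff.mp hdg
    set lc : R := (b j).coeff (mdeg m (b j)) with hlc
    have hlcne : lc ≠ 0 := MvPolynomial.mem_support_iff.mp (mdeg_mem_support m (hb0 j))
    set e : σ →₀ ℕ := d - mdeg m (b j) with he
    have hed : e + mdeg m (b j) = d := tsub_add_cancel_of_le hj
    have heled : e ≤ d := by rw [← hed]; exact le_self_add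
    have hdsube : d - e = mdeg m (b j) := by rw [← hed]; simp
    set g' : MvPolynomial σ R := C lc * g - monomial e c * b j with hg'
    -- coefficient of g' at d vanishes
    have hcoeffd : g'.coeff d = 0 := by
      rw [hg', MvPolynomial.coeff_sub, MvPolynomial.coeff_C_mul,
        MvPolynomial.coeff_monomial_mul', if_pos heled, hdsube, ← hc, ← hlc]
      ring
    -- toSyn d is positive
    have hdpos : (0 : m.syn) < m.toSyn d := by
      rcases eq_or_lt_of_le (bot_le : (⊥ : m.syn) ≤ m.toSyn d) with h | h
      · exfalso
        have hd0 : d = 0 := by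
          apply m.toSyn.injective
          simpa using h.symm
        have : mdeg m (b j) = 0 := le_antisymm (hd0 ▸ hj) zero_le
        exact mdeg_ne_zero m (hbR j) this
      · simpa using h
    -- every monomial of g' in the monomial ideal is < d
    have hstep : ∀ x ∈ g'.support, (∃ j', mdeg m (b j') ≤ x) → m.toSyn x < m.toSyn d := by
      intro x hx hxid
      have hxne : x ≠ d := by
        intro hxd
        rw [hxd, MvPolynomial.mem_support_iff] at hx
        exact hx hcoeffd
      have hxle : m.toSyn x ≤ m.toSyn d := by
        have hxsupp : x ∈ (C lc * g).support ∪ (monomial e c * b j).support := by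
          by_contra hcon
          rw [Finset.mem_union, not_or] at hcon
          have h1 : (C lc * g).coeff x = 0 := MvPolynomial.notMem_support_iff.mp hcon.1
          have h2 : (monomial e c * b j).coeff x = 0 := MvPolynomial.notMem_support_iff.mp hcon.2
          rw [MvPolynomial.mem_support_iff, hg', MvPolynomial.coeff_sub, h1, h2] at hx
          simp at hx
        rcases Finset.mem_union.mp hxsupp with hx1 | hx1
        · -- from C lc * g : it is a monomial of g lying in the ideal, so ≤ d
          have hxg : x ∈ g.support := by
            have := MvPolynomial.mem_support_iff.mp hx1
            rw [MvPolynomial.coeff_C_mul] at this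
            exact MvPolynomial.mem_support_iff.mpr (right_ne_zero_of_mul this)
          have : x ∈ g.support.filter (fun d => ∃ j, mdeg m (b j) ≤ d) :=
            Finset.mem_filter.mpr ⟨hxg, hxid⟩
          calc m.toSyn x ≤ _ := Finset.le_sup this
            _ = m.toSyn d := hdsup
        · -- from monomial e c * b j : bounded by e + mdeg (b j) = d
          have hcx := MvPolynomial.mem_support_iff.mp hx1
          rw [MvPolynomial.coeff_monomial_mul'] at hcx
          by_cases hex : e ≤ x
          · rw [if_pos hex] at hcx
            have hxb : x - e ∈ (b j).support :=
              MvPolynomial.mem_support_iff.mpr (right_ne_zero_of_mul hcx)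
            have hxe : e + (x - e) = x := add_tsub_cancel_of_le hex
            calc m.toSyn x = m.toSyn (e + (x - e)) := by rw [hxe]
              _ = m.toSyn e + m.toSyn (x - e) := by rw [map_add]
              _ ≤ m.toSyn e + m.toSyn (mdeg m (b j)) := by
                  exact add_le_add le_rfl (le_mdeg m hxb)
              _ = m.toSyn (e + mdeg m (b j)) := by rw [map_add]
              _ = m.toSyn d := by rw [hed]
          · rw [if_neg hex] at hcx; exact absurd rfl hcx
      exact lt_of_le_of_ne hxle (fun hh => hxne (m.toSyn.injective hh))
    -- the measure strictly decreases
    have hDlt : (g'.support.filter (fun d => ∃ j, mdeg m (b j) ≤ d)).sup m.toSyn < N := by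
      rw [← hgN, hdsup]
      rw [Finset.sup_lt_iff (by simpa using hdpos)]
      intro x hx
      obtain ⟨hx1, hx2⟩ := Finset.mem_filter.mp hx
      exact hstep x hx1 hx2
    obtain ⟨lam', q', r', hlam', heq', hr'⟩ := ih _ hDlt g' rfl
    refine ⟨lam' * lc, fun j' => q' j' + if j' = j then C lam' * monomial e c else 0,
      r', mul_ne_zero hlam' hlcne, ?_, hr'⟩
    have hsum : ∑ j', (q' j' + if j' = j then C lam' * monomial e c else 0) * b j'
        = (∑ j', q' j' * b j') + (C lam' * monomial e c) * b j := by
      rw [Finset.sum_congr rfl (fun j' _ => add_mul _ _ _), Finset.sum_add_distrib]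
      congr 1
      rw [Finset.sum_eq_single j]
      · simp
      · intro j' _ hj'; simp [hj']
      · intro h; exact absurd (Finset.mem_univ j) h
    rw [hsum]
    have : C lam' * g' = ∑ j', q' j' * b j' + r' := heq'
    calc C (lam' * lc) * g = C lam' * (C lc * g) := by rw [map_mul]; ring
      _ = C lam' * (g' + monomial e c * b j) := by rw [hg']; ring_nf
      _ = C lam' * g' + C lam' * monomial e c * b j := by ring
      _ = (∑ j', q' j' * b j' + r') + C lam' * monomial e c * b j := by rw [this]
      _ = (∑ j', q' j' * b j') + C lam' * monomial e c * b j + r' := by ring
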